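/- If a periodic group G is the product G = AB of two abelian subgroups A and B, then G is locally finite. -/

import Mathlib

/-- Conjugation of a commutator by an element commuting with the first entry. -/
private lemma ito_conjA {G : Type*} [Group G] {x a a₁ b b₁ : G}
    (h1 : x * a = a * x) (h2 : a₁ * a = a * a₁) (hE : b⁻¹ * x = a₁ * b₁) :
    x⁻¹ * (a * b * a⁻¹ * b⁻¹) * x = a * b₁⁻¹ * a⁻¹ * b₁ := by
  have c1 : Commute x a := h1
  have c2 : Commute a₁ a := h2
  have hx' : x⁻¹ * a = a * x⁻¹ := c1.inv_left.eq
  have h2' : a⁻¹ * a₁ = a₁ * a⁻¹ := c2.inv_right.eq.symm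
  have hba : b * a₁ = x * b₁⁻¹ := by
    have hx : x = b * (a₁ * b₁) := by rw [← hE]; group
    rw [hx]; group
  calc x⁻¹ * (a * b * a⁻¹ * b⁻¹) * x
      = (x⁻¹ * a) * (b * a⁻¹ * (b⁻¹ * x)) := by group
    _ = (a * x⁻¹) * (b * a⁻¹ * (a₁ * b₁)) := by rw [hx', hE]
    _ = (a * x⁻¹) * b * (a⁻¹ * a₁) * b₁ := by group
    _ = (a * x⁻¹) * b * (a₁ * a⁻¹) * b₁ := by rw [h2']
    _ = (a * x⁻¹) * (b * a₁) * (a⁻¹ * b₁) := by group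
    _ = (a * x⁻¹) * (x * b₁⁻¹) * (a⁻¹ * b₁) := by rw [hba]
    _ = a * b₁⁻¹ * a⁻¹ * b₁ := by group

/-- Conjugation of a commutator by an element commuting with the second entry. -/
private lemma ito_conjB {G : Type*} [Group G] {y a b b₂ a₂ : G}
    (h1 : y * b = b * y) (h2 : b₂ * b = b * b₂) (hE : a⁻¹ * y = b₂ * a₂) :
    y⁻¹ * (a * b * a⁻¹ * b⁻¹) * y = a₂⁻¹ * b * a₂ * b⁻¹ := by
  have c1 : Commute y b := h1
  have c2 : Commute b₂ b := h2
  have hy' : y⁻¹ * a = a₂⁻¹ * b₂⁻¹ := by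
    have h : y⁻¹ * a = (a⁻¹ * y)⁻¹ := by group
    rw [h, hE]; group
  have hbinv : y⁻¹ * b⁻¹ = b⁻¹ * y⁻¹ := c1.inv_inv.eq
  have hmid : b₂⁻¹ * b * b₂ = b := by rw [c2.inv_left.eq]; group
  calc y⁻¹ * (a * b * a⁻¹ * b⁻¹) * y
      = (y⁻¹ * a) * b * (a⁻¹ * y) * ((y⁻¹ * b⁻¹) * y) := by group
    _ = (a₂⁻¹ * b₂⁻¹) * b * (b₂ * a₂) * ((b⁻¹ * y⁻¹) * y) := by rw [hy', hE, hbinv]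
    _ = a₂⁻¹ * (b₂⁻¹ * b * b₂) * a₂ * b⁻¹ := by group
    _ = a₂⁻¹ * b * a₂ * b⁻¹ := by rw [hmid]

private lemma subtor {K : Type*} [Group K] (hK : ∀ k : K, IsOfFinOrder k)
    (L : Subgroup K) (x : L) : IsOfFinOrder x := by
  have hx : IsOfFinOrder (x : K) := hK x
  rw [← orderOf_pos_iff] at hx ⊢
  rwa [Subgroup.orderOf_coe] at hx

/-- A periodic product of two abelian subgroups is locally finite. -/
theorem periodic_product_of_abelians_locallyFinite {G : Type*} [Group G]
    (hper : ∀ g : G, IsOfFinOrder g) (A B : Subgroup G)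
    (hA : ∀ x ∈ A, ∀ y ∈ A, x * y = y * x)
    (hB : ∀ x ∈ B, ∀ y ∈ B, x * y = y * x)
    (hprod : ∀ g : G, ∃ a ∈ A, ∃ b ∈ B, g = a * b) :
    ∀ H : Subgroup G, H.FG → Finite H := by
  classical
  -- the BA-decomposition
  have hprod' : ∀ g : G, ∃ b ∈ B, ∃ a ∈ A, g = b * a := by
    intro g
    obtain ⟨a, ha, b, hb, h⟩ := hprod g⁻¹
    exact ⟨b⁻¹, inv_mem hb, a⁻¹, inv_mem ha,
      by rw [← mul_inv_rev, ← h, inv_inv]⟩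
  -- the set of commutators [a,b]
  set S : Set G := {g | ∃ a ∈ A, ∃ b ∈ B, g = a * b * a⁻¹ * b⁻¹} with hS
  -- conjugation by elements of A preserves S
  have hconjA : ∀ x ∈ A, ∀ s ∈ S, x⁻¹ * s * x ∈ S := by
    rintro x hx s ⟨a, ha, b, hb, rfl⟩
    obtain ⟨a₁, ha₁, b₁, hb₁, hE⟩ := hprod (b⁻¹ * x)
    refine ⟨a, ha, b₁⁻¹, inv_mem hb₁, ?_⟩
    rw [inv_inv]
    exact ito_conjA (hA x hx a ha) (hA a₁ ha₁ a ha) hE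
  -- conjugation by elements of B preserves S
  have hconjB : ∀ y ∈ B, ∀ s ∈ S, y⁻¹ * s * y ∈ S := by
    rintro y hy s ⟨a, ha, b, hb, rfl⟩
    obtain ⟨b₂, hb₂, a₂, ha₂, hE⟩ := hprod' (a⁻¹ * y)
    refine ⟨a₂⁻¹, inv_mem ha₂, b, hb, ?_⟩
    rw [inv_inv]
    exact ito_conjB (hB y hy b hb) (hB b₂ hb₂ b hb) hE
  -- S is invariant under conjugation
  have hconj : ∀ g : G, ∀ s ∈ S, g⁻¹ * s * g ∈ S := by
    intro g s hs
    obtain ⟨a, ha, b, hb, rfl⟩ := hprod g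
    have h1 := hconjA a ha s hs
    have h2 := hconjB b hb _ h1
    have : b⁻¹ * (a⁻¹ * s * a) * b = (a * b)⁻¹ * s * (a * b) := by group
    rwa [this] at h2
  set N : Subgroup G := Subgroup.closure S with hN
  have hSN : S ⊆ (N : Set G) := Subgroup.subset_closure
  -- N is normal
  have hNnormal : N.Normal := by
    constructor
    intro n hn g
    have : ∀ (m : G), m ∈ N → ∀ g : G, g * m * g⁻¹ ∈ N := by
      intro m hm
      induction hm using Subgroup.closure_induction with
      | mem s hs => intro g
                    have := hconj g⁻¹ s hs
                    rw [inv_inv] at this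
                    exact hSN this
      | one => intro g; simpa using one_mem N
      | mul x y hx hy ihx ihy =>
          intro g
          have : g * (x * y) * g⁻¹ = (g * x * g⁻¹) * (g * y * g⁻¹) := by group
          rw [this]; exact mul_mem (ihx g) (ihy g)
      | inv x hx ihx =>
          intro g
          have : g * x⁻¹ * g⁻¹ = (g * x * g⁻¹)⁻¹ := by group
          rw [this]; exact inv_mem (ihx g)
    exact this n hn g
  haveI := hNnormal
  -- any two elements of S commute (the key Itô computation)
  have hScomm : ∀ s ∈ S, ∀ t ∈ S, s * t = t * s := by
    rintro s ⟨a, ha, b, hb, rfl⟩ t ⟨c, hc, d, hd, rfl⟩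
    obtain ⟨a₁, ha₁, b₁, hb₁, hE₁⟩ := hprod (d⁻¹ * a)
    obtain ⟨b₂, hb₂, a₂, ha₂, hE₂⟩ := hprod' (c⁻¹ * b)
    -- step 1 : conjugate [c,d] by a
    have step1 : a⁻¹ * (c * d * c⁻¹ * d⁻¹) * a = c * b₁⁻¹ * c⁻¹ * b₁ :=
      ito_conjA (hA a ha c hc) (hA a₁ ha₁ c hc) hE₁
    -- step 2 : conjugate by b
    have step2 : b⁻¹ * (c * b₁⁻¹ * c⁻¹ * b₁) * b = a₂⁻¹ * b₁⁻¹ * a₂ * b₁ := by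
      have cb : Commute b b₁ := hB b hb b₁ hb₁
      have cb2 : Commute b₂ b₁ := hB b₂ hb₂ b₁ hb₁
      have h := ito_conjB (b := b₁⁻¹) cb.inv_right.eq cb2.inv_right.eq hE₂
      simpa [inv_inv] using h
    -- step 3 : conjugate by a⁻¹
    have step3 : a * (a₂⁻¹ * b₁⁻¹ * a₂ * b₁) * a⁻¹ = a₂⁻¹ * d * a₂ * d⁻¹ := by
      have hE₃ : (b₁⁻¹)⁻¹ * a⁻¹ = a₁⁻¹ * d⁻¹ := by
        have hb₁' : b₁ = a₁⁻¹ * (d⁻¹ * a) := by rw [hE₁]; group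
        rw [inv_inv, hb₁']; group
      have c1 : Commute a a₂ := hA a ha a₂ ha₂
      have c2 : Commute a₁ a₂ := hA a₁ ha₁ a₂ ha₂
      have h := ito_conjA (x := a⁻¹) (a := a₂⁻¹) (b := b₁⁻¹)
        c1.inv_inv.eq c2.inv_inv.eq hE₃
      simpa [inv_inv] using h
    -- step 4 : conjugate by b⁻¹
    have step4 : b * (a₂⁻¹ * d * a₂ * d⁻¹) * b⁻¹ = c * d * c⁻¹ * d⁻¹ := by
      have hE₄ : (a₂⁻¹)⁻¹ * b⁻¹ = b₂⁻¹ * c⁻¹ := by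
        have ha₂' : a₂ = b₂⁻¹ * (c⁻¹ * b) := by rw [hE₂]; group
        rw [inv_inv, ha₂']; group
      have c1 : Commute b d := hB b hb d hd
      have c2 : Commute b₂ d := hB b₂ hb₂ d hd
      have h := ito_conjB (y := b⁻¹) (a := a₂⁻¹) (b := d)
        c1.inv_left.eq c2.inv_left.eq hE₄
      simpa [inv_inv] using h
    -- put everything together
    have hfinal : (a * b * a⁻¹ * b⁻¹)⁻¹ * (c * d * c⁻¹ * d⁻¹) * (a * b * a⁻¹ * b⁻¹)
        = c * d * c⁻¹ * d⁻¹ := by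
      calc (a * b * a⁻¹ * b⁻¹)⁻¹ * (c * d * c⁻¹ * d⁻¹) * (a * b * a⁻¹ * b⁻¹)
          = b * ((a * ((b⁻¹ * ((a⁻¹ * (c * d * c⁻¹ * d⁻¹) * a)) * b)) * a⁻¹)) * b⁻¹ := by
            group
        _ = c * d * c⁻¹ * d⁻¹ := by rw [step1, step2, step3, step4]
    calc (a * b * a⁻¹ * b⁻¹) * (c * d * c⁻¹ * d⁻¹)
        = (a * b * a⁻¹ * b⁻¹) *
          ((a * b * a⁻¹ * b⁻¹)⁻¹ * (c * d * c⁻¹ * d⁻¹) * (a * b * a⁻¹ * b⁻¹)) := by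
          rw [hfinal]
      _ = (c * d * c⁻¹ * d⁻¹) * (a * b * a⁻¹ * b⁻¹) := by group
  -- hence N is abelian
  have hNcomm : ∀ x ∈ N, ∀ y ∈ N, x * y = y * x := by
    have h1 : N ≤ Subgroup.centralizer S := by
      rw [hN, Subgroup.closure_le]
      intro t ht
      rw [SetLike.mem_coe, Subgroup.mem_centralizer_iff]
      intro s hs
      exact hScomm s hs t ht
    intro x hx y hy
    have hx' : ∀ s ∈ S, s * x = x * s := Subgroup.mem_centralizer_iff.mp (h1 hx)
    have h2 : N ≤ Subgroup.centralizer {x} := by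
      rw [hN, Subgroup.closure_le]
      intro s hs
      rw [SetLike.mem_coe, Subgroup.mem_centralizer_iff]
      rintro z rfl
      exact (hx' s hs).symm
    exact Subgroup.mem_centralizer_iff.mp (h2 hy) x rfl
  -- the quotient G ⧸ N is abelian
  have hABcomm : ∀ a ∈ A, ∀ d ∈ B,
      Commute ((a : G) : G ⧸ N) ((d : G) : G ⧸ N) := by
    intro a ha d hd
    open scoped commutatorElement in
    have h1 : ⁅((a : G) : G ⧸ N), ((d : G) : G ⧸ N)⁆ = 1 := by
      rw [commutatorElement_def, ← QuotientGroup.mk_inv, ← QuotientGroup.mk_inv,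
        ← QuotientGroup.mk_mul, ← QuotientGroup.mk_mul, ← QuotientGroup.mk_mul,
        QuotientGroup.eq_one_iff]
      exact hSN ⟨a, ha, d, hd, rfl⟩
    exact commutatorElement_eq_one_iff_mul_comm.mp h1
  have hQcomm : ∀ u v : G ⧸ N, u * v = v * u := by
    intro u v
    induction u using QuotientGroup.induction_on with
    | H g =>
    induction v using QuotientGroup.induction_on with
    | H h =>
    obtain ⟨a, ha, b, hb, rfl⟩ := hprod g
    obtain ⟨c, hc, d, hd, rfl⟩ := hprod h
    have hac : Commute ((a : G) : G ⧸ N) ((c : G) : G ⧸ N) := congrArg _ (hA a ha c hc)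
    have had : Commute ((a : G) : G ⧸ N) ((d : G) : G ⧸ N) := hABcomm a ha d hd
    have hbc : Commute ((b : G) : G ⧸ N) ((c : G) : G ⧸ N) := (hABcomm c hc b hb).symm
    have hbd : Commute ((b : G) : G ⧸ N) ((d : G) : G ⧸ N) := congrArg _ (hB b hb d hd)
    have : Commute ((a * b : G) : G ⧸ N) ((c * d : G) : G ⧸ N) := by
      rw [QuotientGroup.mk_mul, QuotientGroup.mk_mul]
      exact Commute.mul_left (hac.mul_right had) (hbc.mul_right hbd)
    exact this
  letI : CommGroup (G ⧸ N) :=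
    { (inferInstance : Group (G ⧸ N)) with mul_comm := hQcomm }
  -- the quotient is a torsion group
  have hQtor : Monoid.IsTorsion (G ⧸ N) := by
    intro q
    induction q using QuotientGroup.induction_on with
    | H g => exact (QuotientGroup.mk' N).isOfFinOrder (hper g)
  -- now the local finiteness argument
  intro H hFG
  haveI : Group.FG H := (Group.fg_iff_subgroup_fg H).mpr hFG
  set f : H →* G ⧸ N := (QuotientGroup.mk' N).comp H.subtype with hf
  -- the range of f is finite
  haveI : Group.FG f.range := Group.fg_range f
  have hrtor : Monoid.IsTorsion f.range := by
    intro x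
    have hx : IsOfFinOrder (x : G ⧸ N) := hQtor x
    rw [← orderOf_pos_iff] at hx ⊢
    rwa [Subgroup.orderOf_coe] at hx
  haveI hRange : Finite f.range := CommGroup.finite_of_fg_torsion _ hrtor
  -- the quotient H ⧸ ker f is finite, so ker f is finitely generated (Schreier)
  haveI : Finite (H ⧸ f.ker) := Finite.of_equiv f.range (QuotientGroup.quotientKerEquivRange f).symm.toEquiv
  haveI : f.ker.FiniteIndex := Subgroup.finiteIndex_of_finite_quotient
  haveI : Group.FG f.ker := Subgroup.fg_of_index_ne_zero f.ker
  -- ker f is abelian: its elements lie in N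
  have hkermem : ∀ x : f.ker, ((x : H) : G) ∈ N := by
    intro x
    exact (QuotientGroup.eq_one_iff _).mp (MonoidHom.mem_ker.mp x.2)
  letI : CommGroup f.ker :=
    { (inferInstance : Group f.ker) with
      mul_comm := by
        intro x y
        have := hNcomm _ (hkermem x) _ (hkermem y)
        ext
        exact_mod_cast this }
  have hktor : Monoid.IsTorsion f.ker := by
    intro x
    have hx : IsOfFinOrder (x : H) := subtor hper H x
    rw [← orderOf_pos_iff] at hx ⊢
    rwa [Subgroup.orderOf_coe] at hx
  haveI hKer : Finite f.ker := CommGroup.finite_of_fg_torsion _ hktor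
  -- finally, H is finite
  have hcard : Nat.card H = Nat.card (H ⧸ f.ker) * Nat.card f.ker :=
    Subgroup.card_eq_card_quotient_mul_card_subgroup f.ker
  have hpos : Nat.card H ≠ 0 := by
    rw [hcard]
    exact Nat.mul_ne_zero Nat.card_pos.ne' Nat.card_pos.ne'
  exact Nat.finite_of_card_ne_zero hpos
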